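/- Let d(x, y) = Σᵢ (|xᵢ − yᵢ|/σᵢ)^β on ℝⁿ with β ∈ (0, 2) ∪ (2, ∞) and σᵢ > 0, and let h(s) = A s + b be an affine bijection of ℝⁿ satisfying d(h(s), h(t)) = d(s, t) for all s, t. Then D A D⁻¹ is a generalized permutation matrix, where D = diag(1/σ₁, …, 1/σₙ); equivalently, h permutes, scales and sign-flips the coordinates up to the weights σᵢ. -/
import Mathlib

open Real Finset

-- strict superadditivity of rpow for exponent > 1
lemma aux_super {q a b : ℝ} (hq : 1 < q) (ha : 0 < a) (hb : 0 < b) :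
    a ^ q + b ^ q < (a + b) ^ q := by
  have hab : 0 < a + b := by linarith
  have h1 : a ^ (q - 1) < (a + b) ^ (q - 1) :=
    Real.rpow_lt_rpow ha.le (by linarith) (by linarith)
  have h2 : b ^ (q - 1) < (a + b) ^ (q - 1) :=
    Real.rpow_lt_rpow hb.le (by linarith) (by linarith)
  have e1 := Real.rpow_add ha 1 (q - 1)
  rw [show (1:ℝ) + (q - 1) = q by ring, Real.rpow_one] at e1
  have e2 := Real.rpow_add hb 1 (q - 1)
  rw [show (1:ℝ) + (q - 1) = q by ring, Real.rpow_one] at e2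
  have e3 := Real.rpow_add hab 1 (q - 1)
  rw [show (1:ℝ) + (q - 1) = q by ring, Real.rpow_one] at e3
  calc a ^ q + b ^ q = a * a ^ (q - 1) + b * b ^ (q - 1) := by rw [e1, e2]
    _ < a * (a + b) ^ (q - 1) + b * (a + b) ^ (q - 1) :=
        add_lt_add (mul_lt_mul_of_pos_left h1 ha) (mul_lt_mul_of_pos_left h2 hb)
    _ = (a + b) ^ q := by rw [e3]; ring

-- strict subadditivity of rpow for 0 < exponent < 1
lemma aux_sub {q a b : ℝ} (hq0 : 0 < q) (hq : q < 1) (ha : 0 < a) (hb : 0 < b) :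
    (a + b) ^ q < a ^ q + b ^ q := by
  have hab : 0 < a + b := by linarith
  have h1 : (a + b) ^ (q - 1) < a ^ (q - 1) :=
    Real.rpow_lt_rpow_of_neg ha (by linarith) (by linarith)
  have h2 : (a + b) ^ (q - 1) < b ^ (q - 1) :=
    Real.rpow_lt_rpow_of_neg hb (by linarith) (by linarith)
  have e1 := Real.rpow_add ha 1 (q - 1)
  rw [show (1:ℝ) + (q - 1) = q by ring, Real.rpow_one] at e1
  have e2 := Real.rpow_add hb 1 (q - 1)
  rw [show (1:ℝ) + (q - 1) = q by ring, Real.rpow_one] at e2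
  have e3 := Real.rpow_add hab 1 (q - 1)
  rw [show (1:ℝ) + (q - 1) = q by ring, Real.rpow_one] at e3
  calc (a + b) ^ q = a * (a + b) ^ (q - 1) + b * (a + b) ^ (q - 1) := by rw [e3]; ring
    _ < a * a ^ (q - 1) + b * b ^ (q - 1) :=
        add_lt_add (mul_lt_mul_of_pos_left h1 ha) (mul_lt_mul_of_pos_left h2 hb)
    _ = a ^ q + b ^ q := by rw [e1, e2]

lemma abs_rpow_eq_sq_rpow (p : ℝ) (z : ℝ) : |z| ^ p = (z ^ 2) ^ (p / 2) := by
  rw [← sq_abs, ← Real.rpow_natCast |z| 2, ← Real.rpow_mul (abs_nonneg z)]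
  congr 1
  ring

-- midpoint concavity consequence, 0 < p < 2
lemma key_le {p : ℝ} (hp0 : 0 < p) (hp2 : p < 2) (x y : ℝ) :
    |x + y| ^ p + |x - y| ^ p ≤ 2 * ((x ^ 2 + y ^ 2) ^ (p / 2)) := by
  have hq0 : (0:ℝ) < p / 2 := by linarith
  have hq1 : p / 2 ≤ 1 := by linarith
  have hcon := Real.concaveOn_rpow hq0.le hq1
  have hu : ((x + y) ^ 2 : ℝ) ∈ Set.Ici (0:ℝ) := Set.mem_Ici.mpr (by positivity)
  have hv : ((x - y) ^ 2 : ℝ) ∈ Set.Ici (0:ℝ) := Set.mem_Ici.mpr (by positivity)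
  have := hcon.2 hu hv (by norm_num : (0:ℝ) ≤ 1/2) (by norm_num : (0:ℝ) ≤ 1/2) (by norm_num)
  simp only [smul_eq_mul] at this
  rw [abs_rpow_eq_sq_rpow p (x+y), abs_rpow_eq_sq_rpow p (x-y)]
  have harg : (1/2 : ℝ) * (x + y) ^ 2 + (1/2 : ℝ) * (x - y) ^ 2 = x ^ 2 + y ^ 2 := by ring
  rw [harg] at this
  linarith

-- midpoint convexity consequence, p > 2
lemma key_ge {p : ℝ} (hp2 : 2 < p) (x y : ℝ) :
    2 * ((x ^ 2 + y ^ 2) ^ (p / 2)) ≤ |x + y| ^ p + |x - y| ^ p := by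
  have hq1 : (1:ℝ) ≤ p / 2 := by linarith
  have hcon := convexOn_rpow hq1
  have hu : ((x + y) ^ 2 : ℝ) ∈ Set.Ici (0:ℝ) := Set.mem_Ici.mpr (by positivity)
  have hv : ((x - y) ^ 2 : ℝ) ∈ Set.Ici (0:ℝ) := Set.mem_Ici.mpr (by positivity)
  have := hcon.2 hu hv (by norm_num : (0:ℝ) ≤ 1/2) (by norm_num : (0:ℝ) ≤ 1/2) (by norm_num)
  simp only [smul_eq_mul] at this
  rw [abs_rpow_eq_sq_rpow p (x+y), abs_rpow_eq_sq_rpow p (x-y)]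
  have harg : (1/2 : ℝ) * (x + y) ^ 2 + (1/2 : ℝ) * (x - y) ^ 2 = x ^ 2 + y ^ 2 := by ring
  rw [harg] at this
  linarith

-- non-strict versions of sub/superadditivity
lemma aux_sub_le {q a b : ℝ} (hq0 : 0 < q) (hq : q ≤ 1) (ha : 0 ≤ a) (hb : 0 ≤ b) :
    (a + b) ^ q ≤ a ^ q + b ^ q := by
  rcases ha.eq_or_lt with rfl | ha'
  · simp [Real.zero_rpow hq0.ne']
  rcases hb.eq_or_lt with rfl | hb'
  · simp [Real.zero_rpow hq0.ne']
  rcases hq.eq_or_lt with rfl | hq'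
  · simp
  · exact (aux_sub hq0 hq' ha' hb').le

lemma aux_super_le {q a b : ℝ} (hq : 1 ≤ q) (ha : 0 ≤ a) (hb : 0 ≤ b) :
    a ^ q + b ^ q ≤ (a + b) ^ q := by
  rcases ha.eq_or_lt with rfl | ha'
  · simp [Real.zero_rpow (by linarith : q ≠ 0)]
  rcases hb.eq_or_lt with rfl | hb'
  · simp [Real.zero_rpow (by linarith : q ≠ 0)]
  rcases hq.eq_or_lt with rfl | hq'
  · simp
  · exact (aux_super hq' ha' hb').le

-- pointwise inequalities against 2|x|^p + 2|y|^p
lemma point_le {p : ℝ} (hp0 : 0 < p) (hp2 : p < 2) (x y : ℝ) :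
    |x + y| ^ p + |x - y| ^ p ≤ 2 * |x| ^ p + 2 * |y| ^ p := by
  have h1 := key_le hp0 hp2 x y
  have h2 : (x ^ 2 + y ^ 2) ^ (p/2) ≤ (x ^ 2) ^ (p/2) + (y ^ 2) ^ (p/2) :=
    aux_sub_le (by linarith) (by linarith) (by positivity) (by positivity)
  rw [abs_rpow_eq_sq_rpow p x, abs_rpow_eq_sq_rpow p y]
  linarith

lemma point_lt {p : ℝ} (hp0 : 0 < p) (hp2 : p < 2) {x y : ℝ} (hx : x ≠ 0) (hy : y ≠ 0) :
    |x + y| ^ p + |x - y| ^ p < 2 * |x| ^ p + 2 * |y| ^ p := by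
  have h1 := key_le hp0 hp2 x y
  have h2 : (x ^ 2 + y ^ 2) ^ (p/2) < (x ^ 2) ^ (p/2) + (y ^ 2) ^ (p/2) :=
    aux_sub (by linarith) (by linarith) (by positivity) (by positivity)
  rw [abs_rpow_eq_sq_rpow p x, abs_rpow_eq_sq_rpow p y]
  linarith

lemma point_ge {p : ℝ} (hp2 : 2 < p) (x y : ℝ) :
    2 * |x| ^ p + 2 * |y| ^ p ≤ |x + y| ^ p + |x - y| ^ p := by
  have h1 := key_ge hp2 x y
  have h2 : (x ^ 2) ^ (p/2) + (y ^ 2) ^ (p/2) ≤ (x ^ 2 + y ^ 2) ^ (p/2) :=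
    aux_super_le (by linarith) (by positivity) (by positivity)
  rw [abs_rpow_eq_sq_rpow p x, abs_rpow_eq_sq_rpow p y]
  linarith

lemma point_gt {p : ℝ} (hp2 : 2 < p) {x y : ℝ} (hx : x ≠ 0) (hy : y ≠ 0) :
    2 * |x| ^ p + 2 * |y| ^ p < |x + y| ^ p + |x - y| ^ p := by
  have h1 := key_ge hp2 x y
  have h2 : (x ^ 2) ^ (p/2) + (y ^ 2) ^ (p/2) < (x ^ 2 + y ^ 2) ^ (p/2) :=
    aux_super (by linarith) (by positivity) (by positivity)
  rw [abs_rpow_eq_sq_rpow p x, abs_rpow_eq_sq_rpow p y]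
  linarith

lemma disjoint_support {n : ℕ} {p : ℝ} (hp0 : 0 < p) (hp2 : p ≠ 2)
    (a b : Fin n → ℝ)
    (hsum : ∑ i, (|a i + b i| ^ p + |a i - b i| ^ p) = ∑ i, (2 * |a i| ^ p + 2 * |b i| ^ p)) :
    ∀ i, a i = 0 ∨ b i = 0 := by
  intro i0
  by_contra hc
  push_neg at hc
  rcases lt_or_gt_of_ne hp2 with hlt | hgt
  · have : ∑ i, (|a i + b i| ^ p + |a i - b i| ^ p) < ∑ i, (2 * |a i| ^ p + 2 * |b i| ^ p) :=
      Finset.sum_lt_sum (fun i _ => point_le hp0 hlt _ _)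
        ⟨i0, Finset.mem_univ i0, point_lt hp0 hlt hc.1 hc.2⟩
    linarith
  · have : ∑ i, (2 * |a i| ^ p + 2 * |b i| ^ p) < ∑ i, (|a i + b i| ^ p + |a i - b i| ^ p) :=
      Finset.sum_lt_sum (fun i _ => point_ge hgt _ _)
        ⟨i0, Finset.mem_univ i0, point_gt hgt hc.1 hc.2⟩
    linarith

/-- If an affine bijection `h(s) = A s + b` preserves the weighted β-power
distance `d(x,y) = ∑ᵢ (|xᵢ − yᵢ| / σᵢ)^β` with `β ∈ (0,2) ∪ (2,∞)` and
`σᵢ > 0`, then `D A D⁻¹` (with `D = diag(1/σᵢ)`) is a generalized permutation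
matrix. -/
theorem affine_beta_isometry_is_generalized_permutation {n : ℕ}
    (β : ℝ) (hβ0 : 0 < β) (hβ2 : β ≠ 2)
    (σ : Fin n → ℝ) (hσ : ∀ i, 0 < σ i)
    (d : (Fin n → ℝ) → (Fin n → ℝ) → ℝ)
    (hd : ∀ x y, d x y = ∑ i, (|x i - y i| / σ i) ^ β)
    (A : Matrix (Fin n) (Fin n) ℝ) (hA : IsUnit A) (b : Fin n → ℝ)
    (h : (Fin n → ℝ) → (Fin n → ℝ))
    (hh : ∀ s, h s = A.mulVec s + b)
    (hiso : ∀ s t, d (h s) (h t) = d s t) :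
    (∀ i : Fin n,
      ∃! j : Fin n,
        (Matrix.diagonal (fun k => (σ k)⁻¹) * A * Matrix.diagonal σ) i j ≠ 0) ∧
    (∀ j : Fin n,
      ∃! i : Fin n,
        (Matrix.diagonal (fun k => (σ k)⁻¹) * A * Matrix.diagonal σ) i j ≠ 0) := by
  set M : Matrix (Fin n) (Fin n) ℝ :=
    Matrix.diagonal (fun k => (σ k)⁻¹) * A * Matrix.diagonal σ with hMdef
  have hσne : ∀ i, σ i ≠ 0 := fun i => (hσ i).ne'
  -- Step A: A preserves the weighted sum
  have hAiso : ∀ v : Fin n → ℝ,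
      ∑ i, (|A.mulVec v i| / σ i) ^ β = ∑ i, (|v i| / σ i) ^ β := by
    intro v
    have hv := hiso v 0
    rw [hd, hd, hh, hh] at hv
    simpa [Matrix.mulVec_zero] using hv
  -- Step B: M preserves the plain β-sum
  have hM : ∀ w : Fin n → ℝ, ∑ i, |M.mulVec w i| ^ β = ∑ i, |w i| ^ β := by
    intro w
    have hDw : (Matrix.diagonal σ).mulVec w = fun j => σ j * w j := by
      ext j; rw [Matrix.mulVec_diagonal]
    have hMw : M.mulVec w = fun i => (σ i)⁻¹ * (A.mulVec (fun j => σ j * w j)) i := by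
      funext i
      rw [hMdef, ← Matrix.mulVec_mulVec, ← Matrix.mulVec_mulVec, hDw, Matrix.mulVec_diagonal]
    calc ∑ i, |M.mulVec w i| ^ β
        = ∑ i, (|A.mulVec (fun j => σ j * w j) i| / σ i) ^ β := by
          refine Finset.sum_congr rfl fun i _ => ?_
          rw [hMw]
          rw [abs_mul, abs_of_pos (inv_pos.mpr (hσ i)), inv_mul_eq_div]
      _ = ∑ i, (|(fun j => σ j * w j) i| / σ i) ^ β := hAiso _
      _ = ∑ i, |w i| ^ β := by
          refine Finset.sum_congr rfl fun i _ => ?_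
          simp only []
          rw [abs_mul, abs_of_pos (hσ i), mul_comm (σ i) |w i|, mul_div_assoc,
            div_self (hσne i), mul_one]
  have hsingle : ∀ (j : Fin n) (c : ℝ), ∑ i, |Pi.single j c i| ^ β = |c| ^ β := by
    intro j c
    rw [Finset.sum_eq_single j]
    · simp
    · intro i _ hij; rw [Pi.single_eq_of_ne hij, abs_zero, Real.zero_rpow hβ0.ne']
    · intro habs; exact absurd (Finset.mem_univ j) habs
  have hcol : ∀ j, ∑ i, |M i j| ^ β = 1 := by
    intro j
    have h1 := hM (Pi.single j 1)
    rw [hsingle j 1, abs_one, Real.one_rpow] at h1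
    rw [← h1]
    refine Finset.sum_congr rfl fun i _ => ?_
    congr 2
    rw [show M.mulVec (Pi.single j 1) = fun i => M i j by
      ext i; simp [Matrix.mulVec_single]]
  have hpair : ∀ j k, j ≠ k → ∀ c : ℝ,
      ∑ i, |M i j + c * M i k| ^ β = 1 + |c| ^ β := by
    intro j k hjk c
    have h1 := hM (Pi.single j 1 + Pi.single k c)
    have hw : ∀ i, |((Pi.single j 1 + Pi.single k c : Fin n → ℝ)) i| ^ β
        = |(Pi.single j 1 : Fin n → ℝ) i| ^ β + |(Pi.single k c : Fin n → ℝ) i| ^ β := by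
      intro i
      rcases eq_or_ne i j with rfl | hij
      · simp [Pi.single_eq_of_ne hjk, Real.zero_rpow hβ0.ne']
      · rcases eq_or_ne i k with rfl | hik
        · simp [Pi.single_eq_of_ne hij, Real.zero_rpow hβ0.ne']
        · simp [Pi.single_eq_of_ne hij, Pi.single_eq_of_ne hik, Real.zero_rpow hβ0.ne']
    rw [Finset.sum_congr rfl (fun i _ => hw i), Finset.sum_add_distrib,
      hsingle, hsingle, abs_one, Real.one_rpow] at h1
    rw [← h1]
    refine Finset.sum_congr rfl fun i _ => ?_
    congr 2
    rw [show M.mulVec (Pi.single j 1 + Pi.single k c) = fun i => M i j + c * M i k by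
      ext i; simp [Matrix.mulVec_add, Matrix.mulVec_single, mul_comm]]
  have hdisj : ∀ (i j k : Fin n), j ≠ k → M i j = 0 ∨ M i k = 0 := by
    intro i j k hjk
    have e1 := hpair j k hjk 1
    have e2 := hpair j k hjk (-1)
    have e1' : ∑ i, |M i j + M i k| ^ β = 1 + 1 := by
      rw [show (1:ℝ) + 1 = 1 + |(1:ℝ)| ^ β by rw [abs_one, Real.one_rpow], ← e1]
      exact Finset.sum_congr rfl fun i _ => by congr 2; ring
    have e2' : ∑ i, |M i j - M i k| ^ β = 1 + 1 := by
      rw [show (1:ℝ) + 1 = 1 + |(-1:ℝ)| ^ β by rw [abs_neg, abs_one, Real.one_rpow], ← e2]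
      exact Finset.sum_congr rfl fun i _ => by congr 2; ring
    have hL : ∑ i, (|M i j + M i k| ^ β + |M i j - M i k| ^ β) = 4 := by
      rw [Finset.sum_add_distrib, e1', e2']; norm_num
    have hR : ∑ i, (2 * |M i j| ^ β + 2 * |M i k| ^ β) = 4 := by
      rw [Finset.sum_add_distrib, ← Finset.mul_sum, ← Finset.mul_sum, hcol j, hcol k]
      norm_num
    exact disjoint_support hβ0 hβ2 (fun i => M i j) (fun i => M i k) (by rw [hL, hR]) i
  have hdet : IsUnit M.det := by
    have hAdet : A.det ≠ 0 := by
      have := (Matrix.isUnit_iff_isUnit_det A).mp hA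
      simpa [isUnit_iff_ne_zero] using this
    have hMd : M.det = ((∏ k, (σ k)⁻¹) * A.det) * ∏ k, σ k := by
      rw [hMdef, Matrix.det_mul, Matrix.det_mul, Matrix.det_diagonal, Matrix.det_diagonal]
    rw [isUnit_iff_ne_zero, hMd]
    have h1 : (∏ k, (σ k)⁻¹) ≠ 0 :=
      Finset.prod_ne_zero_iff.mpr fun k _ => inv_ne_zero (hσne k)
    have h2 : (∏ k, σ k) ≠ 0 := Finset.prod_ne_zero_iff.mpr fun k _ => hσne k
    exact mul_ne_zero (mul_ne_zero h1 hAdet) h2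
  have hrowex : ∀ i, ∃ j, M i j ≠ 0 := by
    intro i
    by_contra h0
    push_neg at h0
    have hMinv := Matrix.mul_nonsing_inv M hdet
    have h1 : (M * M⁻¹) i i = 1 := by rw [hMinv]; exact Matrix.one_apply_eq i
    rw [Matrix.mul_apply] at h1
    simp [h0] at h1
  have hcolex : ∀ j, ∃ i, M i j ≠ 0 := by
    intro j
    by_contra h0
    push_neg at h0
    have hc := hcol j
    simp [h0, Real.zero_rpow hβ0.ne'] at hc
  have hrow : ∀ i, ∃! j, M i j ≠ 0 := by
    intro i
    obtain ⟨j, hj⟩ := hrowex i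
    refine ⟨j, hj, fun y hy => ?_⟩
    by_contra hne
    rcases hdisj i y j hne with h' | h'
    · exact hy h'
    · exact hj h'
  choose φ hφ using hrow
  have hsurj : Function.Surjective φ := by
    intro j
    by_contra hs
    push_neg at hs
    obtain ⟨i, hi⟩ := hcolex j
    exact hs i ((hφ i).2 j hi).symm
  have hinj : Function.Injective φ := Finite.injective_iff_surjective.mpr hsurj
  refine ⟨fun i => ⟨φ i, (hφ i).1, fun y hy => (hφ i).2 y hy⟩, fun j => ?_⟩
  obtain ⟨i, rfl⟩ := hsurj j
  exact ⟨i, (hφ i).1, fun i' hi' => (hinj ((hφ i').2 _ hi')).symm⟩
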